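/- arXiv:1711.00035 — 4 statements merged into one kernel-verified Lean document; each statement's English description precedes it below -/
import Mathlib

section
/- Let r > 1 be a real number and n ≥ 1 an integer. Every holomorphic function g defined on the annulus A_{r^n} = {z ∈ ℂ : r^{-n} < |z| < r^n}, mapping A_{r^n} into the open unit disc Δ and satisfying g(1) = 0, has derivative at 1 bounded by |g'(1)| ≤ (1/n) · r/(r−1). Equivalently, the Carathéodory infinitesimal metric of A_{r^n} at the point 1 in the direction 1 satisfies C_{r^n}(1) ≤ (1/n) · r/(r−1). -/
/-- Let `r > 1` and `n ≥ 1`. Every holomorphic function `g` on the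
annulus `A_{r^n} = {z : r^{-n} < |z| < r^n}` mapping into the open unit disc with
`g 1 = 0` satisfies `|g'(1)| ≤ (1/n) · r/(r-1)`. -/
theorem caratheodory_annulus_power_bound
    (r : ℝ) (hr : 1 < r) (n : ℕ) (hn : 1 ≤ n)
    (g : ℂ → ℂ)
    (hg : DifferentiableOn ℂ g {z : ℂ | (r ^ n)⁻¹ < ‖z‖ ∧ ‖z‖ < r ^ n})
    (hmaps : Set.MapsTo g {z : ℂ | (r ^ n)⁻¹ < ‖z‖ ∧ ‖z‖ < r ^ n}
      (Metric.ball (0 : ℂ) 1))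
    (hg1 : g 1 = 0) :
    ‖deriv g 1‖ ≤ (1 / n) * (r / (r - 1)) := by
  have hr0 : (0:ℝ) < r := lt_trans one_pos hr
  have hlogr : (0:ℝ) < Real.log r := Real.log_pos hr
  have hn0 : (0:ℝ) < (n:ℝ) := by exact_mod_cast hn
  set c : ℝ := n * Real.log r with hc
  have hc0 : 0 < c := mul_pos hn0 hlogr
  have hec : Real.exp c = r ^ n := by
    rw [hc, Real.exp_nat_mul, Real.exp_log hr0]
  set S : Set ℂ := {z : ℂ | (r ^ n)⁻¹ < ‖z‖ ∧ ‖z‖ < r ^ n} with hS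
  have hrn1 : (1:ℝ) < r ^ n := one_lt_pow₀ hr (by omega)
  have h1S : (1:ℂ) ∈ S := by
    refine ⟨?_, ?_⟩ <;> rw [norm_one]
    · exact inv_lt_one_of_one_lt₀ hrn1
    · exact hrn1
  have hSopen : IsOpen S := by
    have : S = ((fun z : ℂ => ‖z‖) ⁻¹' Set.Ioi ((r ^ n)⁻¹)) ∩ ((fun z : ℂ => ‖z‖) ⁻¹' Set.Iio (r ^ n)) := by
      ext z; simp [hS, Set.mem_setOf_eq, and_comm]
    rw [this]
    exact (isOpen_Ioi.preimage continuous_norm).inter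
      (isOpen_Iio.preimage continuous_norm)
  set φ : ℂ → ℂ := fun z => Complex.exp ((c:ℂ) * z) with hφ
  have hφmaps : Set.MapsTo φ (Metric.ball (0:ℂ) 1) S := by
    intro z hz
    rw [Metric.mem_ball, dist_zero_right] at hz
    have hre : |z.re| < 1 := lt_of_le_of_lt (Complex.abs_re_le_norm z) hz
    have habs : ‖φ z‖ = Real.exp (c * z.re) := by
      rw [hφ, Complex.norm_exp]
      congr 1
      simp [Complex.mul_re]
    refine ⟨?_, ?_⟩ <;> rw [habs]
    · have : -c < c * z.re := by nlinarith [abs_lt.mp hre]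
      calc (r ^ n)⁻¹ = Real.exp (-c) := by rw [Real.exp_neg, hec]
        _ < Real.exp (c * z.re) := Real.exp_lt_exp.2 this
    · have : c * z.re < c := by nlinarith [abs_lt.mp hre]
      calc Real.exp (c * z.re) < Real.exp c := Real.exp_lt_exp.2 this
        _ = r ^ n := hec
  have hφ0 : φ 0 = 1 := by simp [hφ]
  have hφdiff : Differentiable ℂ φ := by
    exact fun z => (Complex.differentiable_exp _).comp z ((differentiable_id.const_mul _) z)
  have hhd : DifferentiableOn ℂ (g ∘ φ) (Metric.ball (0:ℂ) 1) :=
    hg.comp hφdiff.differentiableOn hφmaps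
  have hhmaps : Set.MapsTo (g ∘ φ) (Metric.ball (0:ℂ) 1) (Metric.ball ((g ∘ φ) 0) 1) := by
    intro z hz
    have := hmaps (hφmaps hz)
    simpa [Function.comp, hφ0, hg1] using this
  have hschwarz : ‖deriv (g ∘ φ) 0‖ ≤ 1 / 1 :=
    Complex.norm_deriv_le_div_of_mapsTo_ball hhd (hhmaps.mono_right Metric.ball_subset_closedBall) one_pos
  have hφd : HasDerivAt φ (c:ℂ) 0 := by
    have := ((hasDerivAt_id (0:ℂ)).const_mul (c:ℂ)).cexp
    simpa using this
  have hgd : DifferentiableAt ℂ g 1 := hg.differentiableAt (hSopen.mem_nhds h1S)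
  have hcomp : HasDerivAt (g ∘ φ) (deriv g 1 * c) 0 := by
    have h2 : HasDerivAt g (deriv g 1) (φ 0) := by rw [hφ0]; exact hgd.hasDerivAt
    exact h2.comp 0 hφd
  have hkey : ‖deriv g 1‖ * c ≤ 1 := by
    have := hcomp.deriv
    rw [this] at hschwarz
    simpa [map_mul, Complex.norm_real, abs_of_pos hc0] using hschwarz
  have hbound : ‖deriv g 1‖ ≤ 1 / c := by
    rw [le_div_iff₀ hc0]; exact hkey
  refine hbound.trans ?_
  have hlog : (r - 1) / r ≤ Real.log r := by
    have h := Real.log_le_sub_one_of_pos (show (0:ℝ) < 1/r by positivity)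
    rw [Real.log_div one_ne_zero (ne_of_gt hr0), Real.log_one] at h
    have : 1 - 1/r ≤ Real.log r := by linarith
    calc (r - 1) / r = 1 - 1/r := by field_simp
      _ ≤ Real.log r := this
  have hr1 : (0:ℝ) < r - 1 := by linarith
  rw [hc, div_le_iff₀ (by positivity)]
  have heq : 1 / (n:ℝ) * (r / (r - 1)) * ((n:ℝ) * Real.log r) = r * Real.log r / (r - 1) := by
    field_simp
  rw [heq, le_div_iff₀ hr1]
  have := (div_le_iff₀ hr0).mp hlog
  nlinarith
end

section
/- Fix a real number r > 1. For each integer n ≥ 1 let C_{r^n}(1) = sup{ |g'(1)| : g holomorphic on A_{r^n} with values in Δ and g(1) = 0 }. Then C_{r^n}(1) ≤ r/((r−1)·n) for every n, and hence the sequence n ↦ C_{r^n}(1) converges to 0 as n → ∞. -/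
open Filter

/-- The round annulus `A_R = {z : 1/R < |z| < R}`. -/
def annulus (R : ℝ) : Set ℂ := {z : ℂ | R⁻¹ < ‖z‖ ∧ ‖z‖ < R}

/-- The Carathéodory infinitesimal metric of `A_R` at the point `1` in direction `1`. -/
noncomputable def carAnnulus (R : ℝ) : ℝ :=
  sSup {c : ℝ | ∃ g : ℂ → ℂ, DifferentiableOn ℂ g (annulus R) ∧
    Set.MapsTo g (annulus R) (Metric.ball (0 : ℂ) 1) ∧ g 1 = 0 ∧
    c = ‖deriv g 1‖}

lemma annulus_isOpen (R : ℝ) : IsOpen (annulus R) := by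
  have : annulus R = {z : ℂ | R⁻¹ < ‖z‖} ∩ {z : ℂ | ‖z‖ < R} := rfl
  rw [this]
  exact (isOpen_lt continuous_const continuous_norm).inter
    (isOpen_lt continuous_norm continuous_const)

lemma exp_mapsTo_annulus {L R : ℝ} (hR : Real.exp L = R) :
    Set.MapsTo Complex.exp (Metric.ball (0 : ℂ) L) (annulus R) := by
  intro w hw
  simp only [Metric.mem_ball, Complex.dist_eq, sub_zero] at hw
  have h1 : |w.re| ≤ ‖w‖ := Complex.abs_re_le_norm w
  have h2 : -L < w.re := by
    have := (abs_lt.mp (lt_of_le_of_lt h1 hw)).1; linarith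
  have h3 : w.re < L := (abs_lt.mp (lt_of_le_of_lt h1 hw)).2
  constructor
  · rw [Complex.norm_exp, ← hR, ← Real.exp_neg]
    exact Real.exp_lt_exp.mpr h2
  · rw [Complex.norm_exp, ← hR]
    exact Real.exp_lt_exp.mpr h3

lemma mem_set_le {R : ℝ} {L : ℝ} (hL : 0 < L) (hR : Real.exp L = R) (c : ℝ)
    (hc : c ∈ {c : ℝ | ∃ g : ℂ → ℂ, DifferentiableOn ℂ g (annulus R) ∧
      Set.MapsTo g (annulus R) (Metric.ball (0 : ℂ) 1) ∧ g 1 = 0 ∧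
      c = ‖deriv g 1‖}) : c ≤ 1 / L := by
  obtain ⟨g, hg, hmap, hg1, rfl⟩ := hc
  have hexp := exp_mapsTo_annulus hR
  have hRgt : 1 < R := by rw [← hR, ← Real.exp_zero]; exact Real.exp_lt_exp.mpr hL
  have h1mem : (1 : ℂ) ∈ annulus R := by
    constructor <;> simp [inv_lt_one_of_one_lt₀ hRgt, hRgt]
  -- f = g ∘ exp on ball 0 L
  have hf : DifferentiableOn ℂ (g ∘ Complex.exp) (Metric.ball (0 : ℂ) L) :=
    hg.comp Complex.differentiable_exp.differentiableOn hexp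
  have hfmap : Set.MapsTo (g ∘ Complex.exp) (Metric.ball (0 : ℂ) L)
      (Metric.ball (0 : ℂ) 1) := hmap.comp hexp
  have hf0 : (g ∘ Complex.exp) 0 = 0 := by simp [hg1]
  have hderiv : deriv (g ∘ Complex.exp) 0 = deriv g 1 := by
    have hgat : DifferentiableAt ℂ g 1 :=
      hg.differentiableAt ((annulus_isOpen R).mem_nhds h1mem)
    have := deriv_comp 0 (by simpa using hgat) Complex.differentiable_exp.differentiableAt
    simpa using this
  have := Complex.norm_deriv_le_div_of_mapsTo_ball hf (by rw [hf0]; exact hfmap.mono_right Metric.ball_subset_closedBall) hL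
  rw [hderiv] at this
  simpa [one_div] using this

lemma car_le {R L : ℝ} (hL : 0 < L) (hR : Real.exp L = R) : carAnnulus R ≤ 1 / L :=
  Real.sSup_le (fun c hc => mem_set_le hL hR c hc) (by positivity)

lemma car_nonneg {R L : ℝ} (hL : 0 < L) (hR : Real.exp L = R) : 0 ≤ carAnnulus R := by
  have hmem : (0 : ℝ) ∈ {c : ℝ | ∃ g : ℂ → ℂ, DifferentiableOn ℂ g (annulus R) ∧
      Set.MapsTo g (annulus R) (Metric.ball (0 : ℂ) 1) ∧ g 1 = 0 ∧
      c = ‖deriv g 1‖} :=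
    ⟨fun _ => 0, differentiableOn_const 0, fun _ _ => by simp, rfl, by simp⟩
  exact le_csSup ⟨1 / L, fun c hc => mem_set_le hL hR c hc⟩ hmem

/-- for fixed `r > 1`, the Carathéodory metric of `A_{r^n}` at `1`
satisfies `C_{r^n}(1) ≤ r/((r-1)·n)` for every `n ≥ 1`, and hence
`C_{r^n}(1) → 0` as `n → ∞`. -/
theorem caratheodory_annulus_power_decay (r : ℝ) (hr : 1 < r) :
    (∀ n : ℕ, 1 ≤ n → carAnnulus (r ^ n) ≤ r / ((r - 1) * n)) ∧
    Tendsto (fun n : ℕ => carAnnulus (r ^ n)) atTop (nhds 0) := by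
  have hr0 : 0 < r := lt_trans one_pos hr
  have hlogr : 0 < Real.log r := Real.log_pos hr
  have hlog_lb : (r - 1) / r ≤ Real.log r := by
    have h := Real.log_le_sub_one_of_pos (show (0:ℝ) < r⁻¹ by positivity)
    rw [Real.log_inv] at h
    have : 1 - r⁻¹ ≤ Real.log r := by linarith
    calc (r - 1) / r = 1 - r⁻¹ := by field_simp
    _ ≤ Real.log r := this
  have key : ∀ n : ℕ, 1 ≤ n → carAnnulus (r ^ n) ≤ r / ((r - 1) * n) := by
    intro n hn
    have hLpos : 0 < (n : ℝ) * Real.log r := by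
      have : (0:ℝ) < n := by exact_mod_cast hn
      positivity
    have hRn : Real.exp ((n : ℝ) * Real.log r) = r ^ n := by
      rw [Real.exp_nat_mul, Real.exp_log hr0]
    have h1 := car_le hLpos hRn
    have h2 : 1 / ((n : ℝ) * Real.log r) ≤ r / ((r - 1) * n) := by
      have hnpos : (0:ℝ) < n := by exact_mod_cast hn
      have hr1 : (0:ℝ) < r - 1 := by linarith
      rw [div_le_div_iff₀ hLpos (by positivity)]
      have : (r - 1) / r * ((n : ℝ) * Real.log r) ≤ Real.log r * ((n : ℝ) * Real.log r) * 1 := by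
        nlinarith
      calc 1 * ((r - 1) * n) = (r - 1) / r * ((n : ℝ) * r) := by field_simp
      _ ≤ Real.log r * ((n : ℝ) * r) := by
          apply mul_le_mul_of_nonneg_right hlog_lb (by positivity)
      _ = r * ((n : ℝ) * Real.log r) := by ring
    exact h1.trans h2
  refine ⟨key, ?_⟩
  have hub : Tendsto (fun n : ℕ => r / ((r - 1) * n)) atTop (nhds 0) := by
    have : (fun n : ℕ => r / ((r - 1) * n)) = fun n : ℕ => (r / (r - 1)) / n := by
      funext n; rw [div_div]
    rw [this]
    exact tendsto_const_div_atTop_nhds_zero_nat _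
  apply tendsto_of_tendsto_of_tendsto_of_le_of_le' tendsto_const_nhds hub
  · filter_upwards [eventually_ge_atTop 1] with n hn
    have hLpos : 0 < (n : ℝ) * Real.log r := by
      have : (0:ℝ) < n := by exact_mod_cast hn
      positivity
    exact car_nonneg hLpos (by rw [Real.exp_nat_mul, Real.exp_log hr0])
  · filter_upwards [eventually_ge_atTop 1] with n hn using key n hn
end

section
/- Let r > 1. Every holomorphic function f from the open unit disc Δ into the annulus A_r = {z ∈ ℂ : 1/r < |z| < r} with f(0) = 1 satisfies |f'(0)| ≤ (4 log r)/π. (Such an f lifts through the holomorphic covering ζ ↦ exp(iζ) of A_r by the strip {|Im ζ| < log r}, and the bound follows from the Schwarz–Pick inequality for the strip; this gives the lower bound for the Kobayashi infinitesimal metric of A_r at a point of its core curve.) -/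
open Complex Metric Set

lemma my_exists_holomorphic_log {f : ℂ → ℂ}
    (hf : DifferentiableOn ℂ f (ball (0:ℂ) 1))
    (hne : ∀ z ∈ ball (0:ℂ) 1, f z ≠ 0) (hf0 : f 0 = 1) :
    ∃ g : ℂ → ℂ, (∀ z ∈ ball (0:ℂ) 1, DifferentiableAt ℂ g z) ∧ g 0 = 0 ∧
      ∀ z ∈ ball (0:ℂ) 1, Complex.exp (g z) = f z := by
  have hB : IsOpen (ball (0:ℂ) 1) := isOpen_ball
  have hA : AnalyticOnNhd ℂ f (ball (0:ℂ) 1) := hf.analyticOnNhd hB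
  have hd : ContinuousOn (deriv f) (ball (0:ℂ) 1) := hA.deriv.continuousOn
  set q : ℂ → ℂ := fun w => deriv f w / f w with hq_def
  have hq : ContinuousOn q (ball (0:ℂ) 1) := hd.div hf.continuousOn hne
  set g : ℂ → ℂ := fun z => ∫ t in (0:ℝ)..1, z * q ((t:ℂ) * z) with hg_def
  -- membership of segment
  have hmem : ∀ z ∈ ball (0:ℂ) 1, ∀ t ∈ Icc (0:ℝ) 1, ((t:ℂ)*z) ∈ ball (0:ℂ) 1 := by
    intro z hz t ht
    rw [mem_ball_zero_iff] at hz ⊢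
    rw [norm_mul, Complex.norm_real, Real.norm_eq_abs, _root_.abs_of_nonneg ht.1]
    calc t * ‖z‖ ≤ 1 * ‖z‖ := by
          apply mul_le_mul_of_nonneg_right ht.2 (norm_nonneg z)
      _ < 1 := by simpa using hz
  have key : ∀ z ∈ ball (0:ℂ) 1, f z * Complex.exp (-(g z)) = 1 := by
    intro z hz
    set ψ : ℝ → ℂ := fun t => z * q ((t:ℂ)*z) with hψ_def
    set S : Set ℝ := {t : ℝ | ((t:ℂ)*z) ∈ ball (0:ℂ) 1} with hS_def
    have hSopen : IsOpen S := hB.preimage (by fun_prop)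
    have hIS : Icc (0:ℝ) 1 ⊆ S := fun t ht => hmem z hz t ht
    have hψ : ContinuousOn ψ S := by
      apply continuousOn_const.mul
      exact hq.comp (by fun_prop) (fun t ht => ht)
    set G : ℝ → ℂ := fun s => ∫ t in (0:ℝ)..s, ψ t with hG_def
    have hG : ∀ s ∈ Icc (0:ℝ) 1, HasDerivAt G (ψ s) s := by
      intro s hs
      have hsS : s ∈ S := hIS hs
      have hc : ContinuousAt ψ s := hψ.continuousAt (hSopen.mem_nhds hsS)
      have hint : IntervalIntegrable ψ MeasureTheory.volume 0 s := by
        apply ContinuousOn.intervalIntegrable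
        apply hψ.mono
        rw [uIcc_of_le hs.1]
        exact (Icc_subset_Icc le_rfl hs.2).trans hIS
      exact intervalIntegral.integral_hasDerivAt_right hint
        (hψ.stronglyMeasurableAtFilter hSopen s hsS) hc
    set φ : ℝ → ℂ := fun s => f ((s:ℂ)*z) * Complex.exp (-(G s)) with hφ_def
    have hφ : ∀ s ∈ Icc (0:ℝ) 1, HasDerivAt φ 0 s := by
      intro s hs
      have hm : ((s:ℂ)*z) ∈ ball (0:ℂ) 1 := hmem z hz s hs
      have hfd : DifferentiableAt ℂ f ((s:ℂ)*z) := hf.differentiableAt (hB.mem_nhds hm)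
      have h1 : HasDerivAt (fun s : ℝ => f ((s:ℂ)*z)) (deriv f ((s:ℂ)*z) * z) s := by
        have hi : HasDerivAt (fun w : ℂ => w * z) z (s:ℂ) := hasDerivAt_mul_const z
        have h1' : HasDerivAt (fun w : ℂ => f (w*z)) (deriv f ((s:ℂ)*z) * z) (s:ℂ) :=
          HasDerivAt.comp (s:ℂ) hfd.hasDerivAt hi
        exact h1'.comp_ofReal
      have h2 := ((hG s hs).neg).cexp
      have h3 := h1.mul h2
      refine h3.congr_deriv ?_
      have hfz : f ((s:ℂ)*z) ≠ 0 := hne _ hm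
      simp only [hψ_def, hq_def]
      field_simp
      ring
    have hφc : ContinuousOn φ (Icc 0 1) := fun s hs => ((hφ s hs).continuousAt).continuousWithinAt
    have h10 := constant_of_has_deriv_right_zero hφc
      (fun s hs => ((hφ s (Ico_subset_Icc_self hs)).hasDerivWithinAt)) 1
      (right_mem_Icc.2 zero_le_one)
    have hφ0 : φ 0 = 1 := by
      simp [hφ_def, hG_def, hf0]
    have hφ1 : φ 1 = f z * Complex.exp (-(g z)) := by
      simp [hφ_def, hG_def, hψ_def, hg_def]
    rw [← hφ1, h10, hφ0]
  have hexp : ∀ z ∈ ball (0:ℂ) 1, Complex.exp (g z) = f z := by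
    intro z hz
    have := key z hz
    rw [Complex.exp_neg] at this
    field_simp at this
    exact this.symm
  have hg0 : g 0 = 0 := by simp [hg_def]
  have hgc : ∀ z₀ ∈ ball (0:ℂ) 1, ContinuousAt g z₀ := by
    intro z₀ hz₀
    rw [mem_ball_zero_iff] at hz₀
    set ρ : ℝ := (‖z₀‖ + 1)/2 with hρ_def
    have hρ1 : ρ < 1 := by rw [hρ_def]; linarith
    have hρ0 : ‖z₀‖ < ρ := by rw [hρ_def]; linarith
    have hKB : closedBall (0:ℂ) ρ ⊆ ball (0:ℂ) 1 := closedBall_subset_ball hρ1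
    have hqK : ContinuousOn q (closedBall (0:ℂ) ρ) := hq.mono hKB
    obtain ⟨Q, hQ⟩ := ContinuousMap.exists_restrict_eq (Metric.isClosed_closedBall)
      ⟨_, hqK.restrict⟩
    have hQeq : ∀ w ∈ closedBall (0:ℂ) ρ, Q w = q w := fun w hw =>
      ContinuousMap.congr_fun hQ ⟨w, hw⟩
    have hcont : Continuous (fun z : ℂ => ∫ t in (0:ℝ)..1, z * Q ((t:ℂ)*z)) := by
      apply intervalIntegral.continuous_parametric_intervalIntegral_of_continuous'
      fun_prop
    have heq : g =ᶠ[nhds z₀] fun z => ∫ t in (0:ℝ)..1, z * Q ((t:ℂ)*z) := by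
      filter_upwards [isOpen_ball.mem_nhds (mem_ball_zero_iff.2 hρ0)] with z hz
      rw [mem_ball_zero_iff] at hz
      apply intervalIntegral.integral_congr
      intro t ht
      rw [uIcc_of_le zero_le_one] at ht
      have htz : ((t:ℂ)*z) ∈ closedBall (0:ℂ) ρ := by
        rw [mem_closedBall_zero_iff, norm_mul, Complex.norm_real, Real.norm_eq_abs,
          _root_.abs_of_nonneg ht.1]
        calc t * ‖z‖ ≤ 1 * ‖z‖ := mul_le_mul_of_nonneg_right ht.2 (norm_nonneg z)
          _ ≤ ρ := by rw [one_mul]; exact hz.le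
      show z * q ((t:ℂ)*z) = z * Q ((t:ℂ)*z)
      rw [hQeq _ htz]
    exact (hcont.continuousAt).congr (Filter.EventuallyEq.symm heq)
  have hgd : ∀ z₀ ∈ ball (0:ℂ) 1, DifferentiableAt ℂ g z₀ := by
    intro z₀ hz₀
    have hfz₀ : f z₀ ≠ 0 := hne _ hz₀
    have hcg := hgc z₀ hz₀
    have hc2 : ContinuousAt (fun z => (g z - g z₀).im) z₀ :=
      Complex.continuous_im.continuousAt.comp (hcg.sub continuousAt_const)
    have h1 : ∀ᶠ z in nhds z₀, (g z - g z₀).im ∈ Ioo (-Real.pi) Real.pi := by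
      apply hc2.eventually_mem
      simp only [sub_self, Complex.zero_im]
      exact Ioo_mem_nhds (neg_lt_zero.2 Real.pi_pos) Real.pi_pos
    have hev : (fun z => g z₀ + Complex.log (f z / f z₀)) =ᶠ[nhds z₀] g := by
      filter_upwards [h1, hB.mem_nhds hz₀] with z h1z hzB
      have hfe : f z / f z₀ = Complex.exp (g z - g z₀) := by
        rw [← hexp z hzB, ← hexp z₀ hz₀, ← Complex.exp_sub]
      rw [hfe, Complex.log_exp h1z.1 h1z.2.le]
      ring
    have hdh : DifferentiableAt ℂ (fun z => g z₀ + Complex.log (f z / f z₀)) z₀ := by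
      apply DifferentiableAt.const_add
      have hlog : DifferentiableAt ℂ Complex.log (f z₀ / f z₀) := by
        rw [div_self hfz₀]
        exact Complex.differentiableAt_log (by simp [Complex.mem_slitPlane_iff])
      exact hlog.comp z₀ ((hf.differentiableAt (hB.mem_nhds hz₀)).div_const _)
    exact (Filter.EventuallyEq.differentiableAt_iff hev).1 hdh
  exact ⟨g, hgd, hg0, hexp⟩

lemma my_tanh_strip {u : ℂ} (h : |u.im| < Real.pi/4) :
    Complex.cosh u ≠ 0 ∧ ‖Complex.tanh u‖ < 1 := by
  obtain ⟨h1, h2⟩ := abs_lt.1 h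
  set a := Complex.exp u with ha
  set b := Complex.exp (-u) with hb
  have hre : (a * (starRingEnd ℂ) b).re = Real.cos (2*u.im) := by
    rw [hb, ← Complex.exp_conj, map_neg, ← Complex.exp_add]
    have h3 : u + -((starRingEnd ℂ) u) = ((2*u.im : ℝ)*Complex.I) := by
      rw [← Complex.sub_conj]; ring
    rw [h3, Complex.exp_re]
    simp
  have hcos : 0 < Real.cos (2*u.im) := by
    apply Real.cos_pos_of_mem_Ioo
    constructor <;> [linarith; linarith]
  have hrepos : 0 < (a * (starRingEnd ℂ) b).re := hre ▸ hcos
  have hane : a ≠ 0 := Complex.exp_ne_zero u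
  have hcosh : Complex.cosh u ≠ 0 := by
    intro hc
    have hc' : a + b = 0 := by
      have : Complex.cosh u = (a + b) / 2 := rfl
      rw [this, div_eq_zero_iff] at hc
      rcases hc with hc | hc
      · exact hc
      · norm_num at hc
    have hab : b = -a := by linear_combination hc'
    rw [hab] at hrepos
    rw [map_neg, mul_neg, Complex.mul_conj] at hrepos
    simp only [Complex.neg_re, Complex.ofReal_re] at hrepos
    have := Complex.normSq_pos.2 hane
    linarith
  refine ⟨hcosh, ?_⟩
  have h4 : Complex.normSq (a - b) < Complex.normSq (a + b) := by
    simp only [Complex.normSq_apply, Complex.add_re, Complex.add_im, Complex.sub_re,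
      Complex.sub_im, Complex.mul_re, Complex.conj_re, Complex.conj_im] at hrepos ⊢
    nlinarith
  have h5 : ‖a - b‖ < ‖a + b‖ := by
    rw [Complex.norm_def, Complex.norm_def]
    exact Real.sqrt_lt_sqrt (Complex.normSq_nonneg _) h4
  have hsinh : Complex.sinh u = (a - b) / 2 := rfl
  have hcosh2 : Complex.cosh u = (a + b) / 2 := rfl
  rw [Complex.tanh_eq_sinh_div_cosh, norm_div, div_lt_one (norm_pos_iff.2 hcosh)]
  rw [hsinh, hcosh2, norm_div, norm_div]
  have h2pos : (0:ℝ) < ‖(2:ℂ)‖ := by simp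
  exact div_lt_div_of_pos_right h5 h2pos

lemma my_hasDerivAt_tanh_zero : HasDerivAt Complex.tanh 1 0 := by
  have h := (Complex.hasDerivAt_sinh 0).div (Complex.hasDerivAt_cosh 0)
    (by rw [Complex.cosh_zero]; exact one_ne_zero)
  have heq : Complex.tanh = fun z => Complex.sinh z / Complex.cosh z :=
    funext Complex.tanh_eq_sinh_div_cosh
  rw [heq]
  refine h.congr_deriv ?_
  simp

lemma my_diff_tanh {u : ℂ} (h : Complex.cosh u ≠ 0) : DifferentiableAt ℂ Complex.tanh u := by
  have heq : Complex.tanh = fun z => Complex.sinh z / Complex.cosh z :=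
    funext Complex.tanh_eq_sinh_div_cosh
  rw [heq]
  exact (Complex.differentiable_sinh u).div (Complex.differentiable_cosh u) h

/-- Kobayashi lower bound for the annulus. If `r > 1` and `f` is
holomorphic on the open unit disc with values in the annulus
`A_r = {z : 1/r < |z| < r}` and `f 0 = 1`, then `|f'(0)| ≤ (4 log r)/π`. -/
theorem kobayashi_annulus_core_bound (r : ℝ) (hr : 1 < r)
    (f : ℂ → ℂ)
    (hf : DifferentiableOn ℂ f (Metric.ball (0 : ℂ) 1))
    (hmaps : Set.MapsTo f (Metric.ball (0 : ℂ) 1)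
      {z : ℂ | r⁻¹ < ‖z‖ ∧ ‖z‖ < r})
    (hf0 : f 0 = 1) :
    ‖deriv f 0‖ ≤ 4 * Real.log r / Real.pi := by
  have hB : IsOpen (ball (0:ℂ) 1) := isOpen_ball
  have hrpos : (0:ℝ) < r := lt_trans one_pos hr
  have hne : ∀ z ∈ ball (0:ℂ) 1, f z ≠ 0 := by
    intro z hz hzero
    have h1 := (hmaps hz).1
    rw [hzero, norm_zero] at h1
    exact absurd h1 (not_lt.2 (inv_nonneg.2 hrpos.le))
  obtain ⟨g, hgd, hg0, hexp⟩ := my_exists_holomorphic_log hf hne hf0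
  set L := Real.log r with hL
  have hLpos : 0 < L := Real.log_pos hr
  have hπ := Real.pi_pos
  have hstrip : ∀ z ∈ ball (0:ℂ) 1, |(g z).re| < L := by
    intro z hz
    have h1 := (hmaps hz).1
    have h2 := (hmaps hz).2
    rw [← hexp z hz, Complex.norm_exp] at h1 h2
    rw [abs_lt]
    constructor
    · have hinv : r⁻¹ = Real.exp (-L) := by rw [Real.exp_neg, Real.exp_log hrpos]
      rw [hinv] at h1
      exact Real.exp_lt_exp.1 h1
    · have hrL : r = Real.exp L := (Real.exp_log hrpos).symm
      rw [hrL] at h2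
      exact Real.exp_lt_exp.1 h2
  set c : ℂ := ((Real.pi / (4*L) : ℝ) : ℂ) * Complex.I with hc
  have hcoef : (0:ℝ) < Real.pi/(4*L) := by positivity
  have him : ∀ z ∈ ball (0:ℂ) 1, |(c * g z).im| < Real.pi/4 := by
    intro z hz
    have him1 : (c * g z).im = Real.pi/(4*L) * (g z).re := by
      rw [hc, mul_assoc, Complex.mul_im, Complex.ofReal_re, Complex.ofReal_im,
        Complex.I_mul_im, zero_mul, add_zero]
    rw [him1, abs_mul, abs_of_pos hcoef]
    calc Real.pi/(4*L) * |(g z).re| < Real.pi/(4*L) * L :=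
          mul_lt_mul_of_pos_left (hstrip z hz) hcoef
      _ = Real.pi/4 := by field_simp
  set F : ℂ → ℂ := fun z => Complex.tanh (c * g z) with hF
  have hFd : DifferentiableOn ℂ F (ball (0:ℂ) 1) := by
    intro z hz
    apply DifferentiableAt.differentiableWithinAt
    exact (my_diff_tanh (my_tanh_strip (him z hz)).1).comp z ((hgd z hz).const_mul c)
  have hF0 : F 0 = 0 := by
    rw [hF]
    simp [hg0]
  have hFmaps : MapsTo F (ball (0:ℂ) 1) (ball (F 0) 1) := by
    intro z hz
    rw [hF0, mem_ball_zero_iff]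
    exact (my_tanh_strip (him z hz)).2
  have hschwarz := Complex.norm_deriv_le_div_of_mapsTo_ball hFd (hFmaps.mono_right ball_subset_closedBall) one_pos
  have h0mem : (0:ℂ) ∈ ball (0:ℂ) 1 := mem_ball_self one_pos
  have hgdd := (hgd 0 h0mem).hasDerivAt
  have hinner : HasDerivAt (fun z => c * g z) (c * deriv g 0) 0 := hgdd.const_mul c
  have houter : HasDerivAt Complex.tanh 1 (c * g 0) := by
    rw [hg0, mul_zero]; exact my_hasDerivAt_tanh_zero
  have hFder : HasDerivAt F (1 * (c * deriv g 0)) 0 :=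
    (houter.comp 0 hinner : HasDerivAt (Complex.tanh ∘ fun z => c * g z) _ 0)
  have hderivF : deriv F 0 = c * deriv g 0 := by rw [hFder.deriv, one_mul]
  have hfg : deriv f 0 = deriv g 0 := by
    have hev : (fun z => Complex.exp (g z)) =ᶠ[nhds 0] f := by
      filter_upwards [hB.mem_nhds h0mem] with z hz
      exact hexp z hz
    have hde : HasDerivAt (fun z => Complex.exp (g z)) (Complex.exp (g 0) * deriv g 0) 0 :=
      hgdd.cexp
    rw [hg0, Complex.exp_zero, one_mul] at hde
    exact (hde.congr_of_eventuallyEq hev.symm).deriv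
  rw [hfg]
  rw [hderivF, norm_mul] at hschwarz
  have hcabs : ‖c‖ = Real.pi/(4*L) := by
    rw [hc, norm_mul, Complex.norm_I, Complex.norm_real, Real.norm_eq_abs, mul_one, abs_of_pos hcoef]
  rw [hcabs, div_one] at hschwarz
  have hmain : Real.pi * ‖deriv g 0‖ ≤ 4*L := by
    rw [div_mul_eq_mul_div, div_le_one (by positivity)] at hschwarz
    exact hschwarz
  rw [le_div_iff₀ hπ, mul_comm]
  exact hmain
end

section
/- Let r > 1. There exists a holomorphic function f from the open unit disc Δ into the annulus A_r = {z ∈ ℂ : 1/r < |z| < r} with f(0) = 1 and |f'(0)| = (4 log r)/π; explicitly one may take f(t) = exp( i · (2 log r/π) · log((1+t)/(1−t)) ), the composition of the biholomorphism from Δ onto the strip {|Im ζ| < log r} with the covering map ζ ↦ exp(iζ). -/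
open Complex

private lemma kae_ne (t : ℂ) (ht : t ∈ Metric.ball (0 : ℂ) 1) : (1 : ℂ) - t ≠ 0 := by
  have ht' : ‖t‖ < 1 := by simpa [Complex.dist_eq] using ht
  intro h
  rw [sub_eq_zero] at h
  simp [← h] at ht'

private lemma kae_re (t : ℂ) (ht : t ∈ Metric.ball (0 : ℂ) 1) :
    0 < ((1 + t) / (1 - t)).re := by
  have ht' : ‖t‖ < 1 := by simpa [Complex.dist_eq] using ht
  have hne := kae_ne t ht
  have h1 : Complex.normSq t < 1 := by
    have h := Complex.sq_norm t
    nlinarith [norm_nonneg t]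
  have h2 : 0 < Complex.normSq (1 - t) := Complex.normSq_pos.mpr hne
  rw [Complex.div_re]
  rw [Complex.normSq_apply] at h1
  simp only [Complex.add_re, Complex.one_re, Complex.sub_re, Complex.add_im,
    Complex.one_im, Complex.sub_im, zero_add, zero_sub]
  rw [← add_div]
  apply div_pos _ h2
  nlinarith

private lemma kae_diff (c : ℝ) :
    DifferentiableOn ℂ
      (fun t : ℂ => Complex.exp (Complex.I * (c : ℂ) * Complex.log ((1 + t) / (1 - t))))
      (Metric.ball (0 : ℂ) 1) := by
  intro t ht
  have hne := kae_ne t ht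
  have hre := kae_re t ht
  have hdiv : DifferentiableAt ℂ (fun t : ℂ => (1 + t) / (1 - t)) t :=
    DifferentiableAt.div (by fun_prop) (by fun_prop) hne
  have hlog : DifferentiableAt ℂ (fun t : ℂ => Complex.log ((1 + t) / (1 - t))) t :=
    hdiv.clog (Complex.mem_slitPlane_iff.mpr (Or.inl hre))
  exact ((hlog.const_mul _).cexp).differentiableWithinAt

private lemma kae_deriv (c : ℝ) :
    HasDerivAt
      (fun t : ℂ => Complex.exp (Complex.I * (c : ℂ) * Complex.log ((1 + t) / (1 - t))))
      (Complex.I * (c : ℂ) * 2) 0 := by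
  have h1 : HasDerivAt (fun t : ℂ => (1 + t) / (1 - t)) 2 0 := by
    have ha : HasDerivAt (fun t : ℂ => 1 + t) 1 0 := (hasDerivAt_id 0).const_add 1
    have hb : HasDerivAt (fun t : ℂ => 1 - t) (-1) 0 := (hasDerivAt_id 0).const_sub 1
    have := ha.div hb (by norm_num)
    exact this.congr_deriv (by norm_num)
  have hg : HasDerivAt (fun t : ℂ => Complex.log ((1 + t) / (1 - t))) 2 0 := by
    have := h1.clog (by norm_num [Complex.mem_slitPlane_iff])
    simpa using this
  have := (hg.const_mul (Complex.I * (c : ℂ))).cexp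
  simpa [mul_comm] using this

/-- for `r > 1`, the explicit map
`f(t) = exp(i · (2 log r/π) · log((1+t)/(1−t)))` is holomorphic from the open unit
disc into the annulus `A_r`, with `f 0 = 1` and `|f'(0)| = (4 log r)/π`; in
particular such an extremal map exists. -/
theorem kobayashi_annulus_extremal_map (r : ℝ) (hr : 1 < r) :
    (DifferentiableOn ℂ
        (fun t : ℂ =>
          Complex.exp (Complex.I * ((2 * Real.log r / Real.pi : ℝ) : ℂ) *
            Complex.log ((1 + t) / (1 - t))))
        (Metric.ball (0 : ℂ) 1) ∧
      Set.MapsTo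
        (fun t : ℂ =>
          Complex.exp (Complex.I * ((2 * Real.log r / Real.pi : ℝ) : ℂ) *
            Complex.log ((1 + t) / (1 - t))))
        (Metric.ball (0 : ℂ) 1) {z : ℂ | r⁻¹ < ‖z‖ ∧ ‖z‖ < r} ∧
      Complex.exp (Complex.I * ((2 * Real.log r / Real.pi : ℝ) : ℂ) *
          Complex.log ((1 + 0) / (1 - 0))) = 1 ∧
      ‖
        (deriv (fun t : ℂ =>
          Complex.exp (Complex.I * ((2 * Real.log r / Real.pi : ℝ) : ℂ) *
            Complex.log ((1 + t) / (1 - t)))) 0)‖ = 4 * Real.log r / Real.pi) ∧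
    ∃ f : ℂ → ℂ, DifferentiableOn ℂ f (Metric.ball (0 : ℂ) 1) ∧
      Set.MapsTo f (Metric.ball (0 : ℂ) 1)
        {z : ℂ | r⁻¹ < ‖z‖ ∧ ‖z‖ < r} ∧
      f 0 = 1 ∧ ‖deriv f 0‖ = 4 * Real.log r / Real.pi := by
  have hπ : (0:ℝ) < Real.pi := Real.pi_pos
  have hlog : 0 < Real.log r := Real.log_pos hr
  set c : ℝ := 2 * Real.log r / Real.pi with hc
  have hcpos : 0 < c := by positivity
  have hdiff := kae_diff c
  have hmaps : Set.MapsTo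
      (fun t : ℂ => Complex.exp (Complex.I * (c : ℂ) * Complex.log ((1 + t) / (1 - t))))
      (Metric.ball (0 : ℂ) 1) {z : ℂ | r⁻¹ < ‖z‖ ∧ ‖z‖ < r} := by
    intro t ht
    have hre := kae_re t ht
    set w : ℂ := (1 + t) / (1 - t) with hw
    have habs : ‖Complex.exp (Complex.I * (c : ℂ) * Complex.log w)‖
        = Real.exp (-(c * Complex.arg w)) := by
      rw [Complex.norm_exp]
      congr 1
      have : (Complex.I * (c : ℂ) * Complex.log w).re = -(c * (Complex.log w).im) := by
        simp [Complex.mul_re, Complex.mul_im]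
      rw [this, Complex.log_im]
    have harg : |Complex.arg w| < Real.pi / 2 :=
      Complex.abs_arg_lt_pi_div_two_iff.mpr (Or.inl hre)
    have hbd : |c * Complex.arg w| < Real.log r := by
      rw [abs_mul, _root_.abs_of_nonneg hcpos.le]
      calc c * |Complex.arg w| < c * (Real.pi / 2) := by
            exact mul_lt_mul_of_pos_left harg hcpos
        _ = Real.log r := by rw [hc]; field_simp
    have h1 : -(c * Complex.arg w) < Real.log r := by
      have := abs_lt.mp hbd; linarith [this.1, this.2]
    have h2 : -Real.log r < -(c * Complex.arg w) := by
      have := abs_lt.mp hbd; linarith [this.1, this.2]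
    constructor
    · rw [habs]
      calc r⁻¹ = Real.exp (-Real.log r) := by
            rw [Real.exp_neg, Real.exp_log (by linarith)]
        _ < _ := Real.exp_lt_exp.mpr h2
    · rw [habs]
      calc Real.exp (-(c * Complex.arg w)) < Real.exp (Real.log r) :=
            Real.exp_lt_exp.mpr h1
        _ = r := Real.exp_log (by linarith)
  have h0 : Complex.exp (Complex.I * (c : ℂ) * Complex.log ((1 + 0) / (1 - 0))) = 1 := by
    norm_num
  have hder := kae_deriv c
  have habs0 : ‖
      (deriv (fun t : ℂ =>
        Complex.exp (Complex.I * (c : ℂ) * Complex.log ((1 + t) / (1 - t)))) 0)‖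
      = 4 * Real.log r / Real.pi := by
    rw [hder.deriv]
    simp [norm_mul, Complex.norm_real, _root_.abs_of_nonneg hcpos.le, hc,
      _root_.abs_of_pos hlog, _root_.abs_of_pos hπ]
    ring
  exact ⟨⟨hdiff, hmaps, h0, habs0⟩, _, hdiff, hmaps, h0, habs0⟩
end
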